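/- The recursive procedure ED explores exactly the set of all valid error patterns: starting from ED(t+1, 0), the binary recursion where at index i one either includes i and jumps to i+t+1, or excludes i and moves to i+1, terminating when i ≥ m, produces each subset {i_1 < ... < i_r} ⊆ {t+1, ..., m−1} with gaps > t exactly once. -/

import Mathlib

/-- The recursive enumeration procedure `ED`: from state `i` with accumulated
set `acc`, output `acc` if `i ≥ m`; otherwise either include `i` and jump to
`i + t + 1`, or exclude `i` and move to `i + 1`. -/
def EDrun (m t : ℕ) (i : ℕ) (acc : Finset ℕ) : List (Finset ℕ) :=
  if h : m ≤ i then [acc]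
  else EDrun m t (i + t + 1) (insert i acc) ++ EDrun m t (i + 1) acc
termination_by m - i
decreasing_by all_goals omega

lemma EDrun_map (m t i : ℕ) (acc : Finset ℕ) :
    EDrun m t i acc = (EDrun m t i ∅).map (· ∪ acc) := by
  conv_lhs => rw [EDrun]
  conv_rhs => rw [EDrun]
  split
  · simp
  · rw [EDrun_map m t (i + t + 1) (insert i acc),
      EDrun_map m t (i + t + 1) (insert i ∅),
      EDrun_map m t (i + 1) acc]
    simp only [List.map_append, List.map_map]
    congr 1
    apply List.map_congr_left
    intro S _
    simp only [Function.comp_apply]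
    ext x
    simp [Finset.mem_union, Finset.mem_insert]
termination_by m - i
decreasing_by all_goals omega

lemma mem_EDrun (m t : ℕ) (hm : 1 ≤ m) (i : ℕ) (S : Finset ℕ) :
    S ∈ EDrun m t i ∅ ↔
      (S ⊆ Finset.Icc i (m - 1) ∧ ∀ a ∈ S, ∀ b ∈ S, a < b → t < b - a) := by
  rw [EDrun]
  split
  next h =>
    have hempty : Finset.Icc i (m - 1) = ∅ := by
      apply Finset.Icc_eq_empty; omega
    simp only [List.mem_singleton, hempty, Finset.subset_empty]
    constructor
    · rintro rfl; simp
    · rintro ⟨rfl, -⟩; rfl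
  next h =>
    rw [List.mem_append, EDrun_map m t (i + t + 1) (insert i ∅), List.mem_map]
    have h1 : ∀ T : Finset ℕ, T ∈ EDrun m t (i + t + 1) ∅ ↔
        (T ⊆ Finset.Icc (i + t + 1) (m - 1) ∧ ∀ a ∈ T, ∀ b ∈ T, a < b → t < b - a) :=
      mem_EDrun m t hm (i + t + 1)
    have h2 : S ∈ EDrun m t (i + 1) ∅ ↔
        (S ⊆ Finset.Icc (i + 1) (m - 1) ∧ ∀ a ∈ S, ∀ b ∈ S, a < b → t < b - a) :=
      mem_EDrun m t hm (i + 1) S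
    simp only [h1, h2]
    constructor
    · rintro (⟨T, ⟨hT, hg⟩, rfl⟩ | ⟨hsub, hg⟩)
      · have hins : insert i ∅ = ({i} : Finset ℕ) := by simp
        constructor
        · intro x hx
          rw [hins, Finset.mem_union, Finset.mem_singleton] at hx
          rcases hx with hx | rfl
          · have := hT hx
            rw [Finset.mem_Icc] at this ⊢; omega
          · rw [Finset.mem_Icc]; omega
        · intro a ha b hb hab
          rw [hins, Finset.mem_union, Finset.mem_singleton] at ha hb
          rcases ha with ha | rfl <;> rcases hb with hb | rfl
          · exact hg a ha b hb hab
          · have := hT ha; rw [Finset.mem_Icc] at this; omega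
          · have := hT hb; rw [Finset.mem_Icc] at this; omega
          · omega
      · refine ⟨fun x hx => ?_, hg⟩
        have := hsub hx
        rw [Finset.mem_Icc] at this ⊢; omega
    · rintro ⟨hsub, hg⟩
      by_cases hi : i ∈ S
      · left
        refine ⟨S.erase i, ⟨⟨fun x hx => ?_, ?_⟩, ?_⟩⟩
        · rw [Finset.mem_erase] at hx
          obtain ⟨hne, hxS⟩ := hx
          have h1 := hsub hxS
          rw [Finset.mem_Icc] at h1 ⊢
          have : i < x := by omega
          have := hg i hi x hxS this
          omega
        · intro a ha b hb hab
          rw [Finset.mem_erase] at ha hb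
          exact hg a ha.2 b hb.2 hab
        · have hins : insert i ∅ = ({i} : Finset ℕ) := by simp
          rw [hins]
          rw [Finset.union_comm, ← Finset.insert_eq]
          exact Finset.insert_erase hi
      · right
        refine ⟨fun x hx => ?_, hg⟩
        have h3 := hsub hx
        rw [Finset.mem_Icc] at h3 ⊢
        have h4 : x ≠ i := fun h => hi (h ▸ hx)
        omega
termination_by m - i
decreasing_by all_goals omega

lemma nodup_EDrun (m t : ℕ) (hm : 1 ≤ m) (i : ℕ) : (EDrun m t i ∅).Nodup := by
  rw [EDrun]
  split
  · simp
  next h =>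
    rw [EDrun_map m t (i + t + 1) (insert i ∅)]
    have hins : insert i ∅ = ({i} : Finset ℕ) := by simp
    have hni : ∀ T ∈ EDrun m t (i + t + 1) ∅, i ∉ T := by
      intro T hT hiT
      have := ((mem_EDrun m t hm (i + t + 1) T).1 hT).1 hiT
      rw [Finset.mem_Icc] at this; omega
    refine List.Nodup.append ?_ (nodup_EDrun m t hm (i + 1)) ?_
    · apply List.Nodup.map_on
      · intro T1 h1 T2 h2 heq
        have e1 : T1 = (T1 ∪ insert i ∅).erase i := by
          rw [hins, Finset.union_comm, ← Finset.insert_eq,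
            Finset.erase_insert (hni T1 h1)]
        have e2 : T2 = (T2 ∪ insert i ∅).erase i := by
          rw [hins, Finset.union_comm, ← Finset.insert_eq,
            Finset.erase_insert (hni T2 h2)]
        rw [e1, e2, heq]
      · exact nodup_EDrun m t hm (i + t + 1)
    · intro S hS1 hS2
      rw [List.mem_map] at hS1
      obtain ⟨T, hT, rfl⟩ := hS1
      have hiS : i ∈ T ∪ insert i ∅ := by simp
      have := ((mem_EDrun m t hm (i + 1) _).1 hS2).1 hiS
      rw [Finset.mem_Icc] at this; omega
termination_by m - i
decreasing_by all_goals omega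

theorem stmt_16 (m t : ℕ) (hm : t + 1 < m) :
    (EDrun m t (t + 1) ∅).Nodup ∧
    ∀ S : Finset ℕ, S ∈ EDrun m t (t + 1) ∅ ↔
      (S ⊆ Finset.Icc (t + 1) (m - 1) ∧ ∀ a ∈ S, ∀ b ∈ S, a < b → t < b - a) := by
  exact ⟨nodup_EDrun m t (by omega) (t + 1), fun S => mem_EDrun m t (by omega) (t + 1) S⟩
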